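/- The function OPT satisfies the dynamic-programming recurrence: OPT(i,i,w) = 0 for all w ≥ 0; OPT(i,j,0) = ∞ for i < j; and for all 1 ≤ i < j ≤ n and w ≥ 1, OPT(i,j,w) = (p_i + ⋯ + p_j) + min_{i<k≤j} ( OPT(i,k−1,w) + OPT(k,j,w−1) ). -/

import Mathlib

open scoped ENNReal NNReal BigOperators

/-- `OPT p i j w` is the infimum, over all alphabetic prefix codes `c` on the symbols
`{i,…,j}` in which every codeword contains at most `w` ones, of the average length
`∑_{k=i}^{j} p_k · |c k|` (`= ∞` when no such code exists). A code is a prefix code if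
no codeword is a prefix of another, and it is alphabetic if it is strictly
order-preserving for the lexicographic order on binary strings (with `0 < 1`). -/
noncomputable def OPT (p : ℕ → ℝ≥0) (i j w : ℕ) : ℝ≥0∞ :=
  ⨅ (c : ℕ → List Bool)
    (_ : ∀ k ∈ Finset.Icc i j, ∀ l ∈ Finset.Icc i j, k ≠ l → ¬ (c k <+: c l))
    (_ : ∀ k ∈ Finset.Icc i j, ∀ l ∈ Finset.Icc i j, k < l → List.Lex (· < ·) (c k) (c l))
    (_ : ∀ k ∈ Finset.Icc i j, (c k).count true ≤ w),
    ∑ k ∈ Finset.Icc i j, (p k : ℝ≥0∞) * ((c k).length : ℝ≥0∞)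

private lemma cons_headI_tail {l : List Bool} (h : l ≠ []) : l.headI :: l.tail = l := by
  cases l with
  | nil => exact absurd rfl h
  | cons a t => rfl

private lemma lex_tail {a : Bool} {s t : List Bool}
    (h : List.Lex (· < ·) (a :: s) (a :: t)) : List.Lex (· < ·) s t := by
  cases h with
  | cons h => exact h
  | rel h => exact absurd h (lt_irrefl a)

private lemma lex_head {a b : Bool} {s t : List Bool}
    (h : List.Lex (· < ·) (a :: s) (b :: t)) (ha : a = true) : b = true := by
  cases h with
  | cons h => exact ha
  | rel h => exact (Bool.lt_iff.mp h).2

private lemma lex_no_true : ∀ {s t : List Bool}, List.Lex (· < ·) s t →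
    s.count true = 0 → t.count true = 0 → s <+: t := by
  intro s t h
  induction h with
  | nil => intro _ _; exact List.nil_prefix
  | @rel a l₁ b l₂ h =>
    intro _ ht
    obtain ⟨_, rfl⟩ := Bool.lt_iff.mp h
    simp [List.count_cons] at ht
  | @cons a l₁ l₂ h ih =>
    intro hs ht
    simp only [List.count_cons] at hs ht
    exact List.cons_prefix_cons.mpr ⟨rfl, ih (by omega) (by omega)⟩

open Finset in
private lemma opt_le (p : ℕ → ℝ≥0) (i j w : ℕ) (c : ℕ → List Bool)
    (h1 : ∀ k ∈ Icc i j, ∀ l ∈ Icc i j, k ≠ l → ¬ (c k <+: c l))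
    (h2 : ∀ k ∈ Icc i j, ∀ l ∈ Icc i j, k < l → List.Lex (· < ·) (c k) (c l))
    (h3 : ∀ k ∈ Icc i j, (c k).count true ≤ w) :
    OPT p i j w ≤ ∑ k ∈ Icc i j, (p k : ℝ≥0∞) * ((c k).length : ℝ≥0∞) := by
  rw [OPT]
  exact iInf_le_of_le c (iInf_le_of_le h1 (iInf_le_of_le h2 (iInf_le _ h3)))

open Finset in
private lemma code_ne_nil {i j : ℕ} (hij : i < j) (c : ℕ → List Bool)
    (h1 : ∀ k ∈ Icc i j, ∀ l ∈ Icc i j, k ≠ l → ¬ (c k <+: c l)) :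
    ∀ m ∈ Icc i j, c m ≠ [] := by
  intro m hm hnil
  rcases eq_or_ne m i with rfl | hne
  · exact h1 m hm j (by simp [hij.le]) (Nat.ne_of_lt hij) (hnil ▸ List.nil_prefix)
  · exact h1 m hm i (by simp [hij.le]) hne (hnil ▸ List.nil_prefix)

open Finset in
private lemma sum_split {i j k : ℕ} (hik : i < k) (hkj : k ≤ j)
    {M : Type*} [AddCommMonoid M] (f : ℕ → M) :
    ∑ m ∈ Icc i j, f m = (∑ m ∈ Icc i (k-1), f m) + ∑ m ∈ Icc k j, f m := by
  have h1 : Icc i (k-1) = Ico i k := by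
    rw [← Finset.Ico_add_one_right_eq_Icc]; congr 1; omega
  have h2 : Icc k j = Ico k (j+1) := (Finset.Ico_add_one_right_eq_Icc k j).symm
  rw [h1, h2, ← Finset.Ico_add_one_right_eq_Icc i j]
  exact (Finset.sum_Ico_consecutive f (by omega) (by omega)).symm

open Finset in
private lemma cost_ge (p : ℕ → ℝ≥0) (i j w : ℕ) (hij : i < j) :
    ∀ N (c : ℕ → List Bool),
      (∑ m ∈ Icc i j, (c m).length) ≤ N →
      (∀ k ∈ Icc i j, ∀ l ∈ Icc i j, k ≠ l → ¬ (c k <+: c l)) →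
      (∀ k ∈ Icc i j, ∀ l ∈ Icc i j, k < l → List.Lex (· < ·) (c k) (c l)) →
      (∀ k ∈ Icc i j, (c k).count true ≤ w) →
      (∑ k ∈ Icc i j, (p k : ℝ≥0∞)) +
        (⨅ k ∈ Ioc i j, (OPT p i (k - 1) w + OPT p k j (w - 1)))
        ≤ ∑ k ∈ Icc i j, (p k : ℝ≥0∞) * ((c k).length : ℝ≥0∞) := by
  intro N
  induction N with
  | zero =>
    intro c hN h1 h2 h3
    exfalso
    have hi : i ∈ Icc i j := by simp [hij.le]
    have := code_ne_nil hij c h1 i hi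
    have hlen : (c i).length = 0 := by
      have : (c i).length ≤ ∑ m ∈ Icc i j, (c m).length :=
        Finset.single_le_sum (f := fun m => (c m).length) (fun m _ => Nat.zero_le _) hi
      omega
    exact this (List.length_eq_zero_iff.mp hlen)
  | succ N ih =>
    intro c hN h1 h2 h3
    have hne := code_ne_nil hij c h1
    have hi : i ∈ Icc i j := by simp [hij.le]
    have hj : j ∈ Icc i j := by simp [hij.le]
    -- each codeword is headI :: tail
    have hct : ∀ m ∈ Icc i j, (c m).headI :: (c m).tail = c m :=
      fun m hm => cons_headI_tail (hne m hm)
    have hlen : ∀ m ∈ Icc i j, (c m).length = (c m).tail.length + 1 := by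
      intro m hm
      conv_lhs => rw [← hct m hm]
      simp
    by_cases hA : ∀ m ∈ Icc i j, (c m).headI = (c i).headI
    · -- all heads equal: strip first bit
      set c' : ℕ → List Bool := fun m => (c m).tail with hc'
      have h1' : ∀ k ∈ Icc i j, ∀ l ∈ Icc i j, k ≠ l → ¬ (c' k <+: c' l) := by
        intro k hk l hl hkl hpre
        apply h1 k hk l hl hkl
        rw [← hct k hk, ← hct l hl]
        exact List.cons_prefix_cons.mpr ⟨(hA k hk).trans (hA l hl).symm, hpre⟩
      have h2' : ∀ k ∈ Icc i j, ∀ l ∈ Icc i j, k < l → List.Lex (· < ·) (c' k) (c' l) := by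
        intro k hk l hl hkl
        have := h2 k hk l hl hkl
        rw [← hct k hk, ← hct l hl, (hA k hk).trans (hA l hl).symm] at this
        exact lex_tail this
      have h3' : ∀ k ∈ Icc i j, (c' k).count true ≤ w :=
        fun k hk => le_trans ((List.tail_sublist (c k)).count_le true) (h3 k hk)
      have hN' : ∑ m ∈ Icc i j, (c' m).length ≤ N := by
        have hlt : ∑ m ∈ Icc i j, (c' m).length < ∑ m ∈ Icc i j, (c m).length :=
          Finset.sum_lt_sum (fun m hm => by simp only [hc']; rw [hlen m hm]; omega)
            ⟨i, hi, by simp only [hc']; rw [hlen i hi]; omega⟩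
        omega
      have key := ih c' hN' h1' h2' h3'
      calc (∑ k ∈ Icc i j, (p k : ℝ≥0∞)) + ⨅ k ∈ Ioc i j, (OPT p i (k-1) w + OPT p k j (w-1))
          ≤ (∑ k ∈ Icc i j, (p k : ℝ≥0∞)) +
            ((∑ k ∈ Icc i j, (p k : ℝ≥0∞)) + ⨅ k ∈ Ioc i j, (OPT p i (k-1) w + OPT p k j (w-1))) := by
            exact le_add_left le_rfl
        _ ≤ (∑ k ∈ Icc i j, (p k : ℝ≥0∞)) + ∑ k ∈ Icc i j, (p k : ℝ≥0∞) * ((c' k).length : ℝ≥0∞) :=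
            add_le_add_right key _
        _ = ∑ k ∈ Icc i j, (p k : ℝ≥0∞) * ((c k).length : ℝ≥0∞) := by
            rw [← Finset.sum_add_distrib]
            refine Finset.sum_congr rfl fun m hm => ?_
            rw [hlen m hm]
            push_cast
            ring
    · -- heads differ: split at first codeword starting with 1
      push_neg at hA
      have hifalse : (c i).headI = false := by
        by_contra hfi
        have hfi' : (c i).headI = true := eq_true_of_ne_false hfi
        obtain ⟨m, hm, hmne⟩ := hA
        apply hmne
        rcases eq_or_lt_of_le (mem_Icc.mp hm).1 with h' | h'
        · rw [← h']
        · have hl := h2 i hi m hm h'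
          rw [← hct i hi, ← hct m hm] at hl
          rw [lex_head hl hfi', hfi']
      have hP : ∃ m, m ∈ Icc i j ∧ (c m).headI = true := by
        obtain ⟨m, hm, hmne⟩ := hA
        rw [hifalse] at hmne
        exact ⟨m, hm, eq_true_of_ne_false hmne⟩
      set k := Nat.find hP with hk
      obtain ⟨hkmem, hktrue⟩ := Nat.find_spec hP
      have hkmin : ∀ m, m < k → ¬(m ∈ Icc i j ∧ (c m).headI = true) := fun m hm => Nat.find_min hP hm
      have hik : i < k := by
        rcases eq_or_lt_of_le (mem_Icc.mp hkmem).1 with h' | h'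
        · exfalso; rw [← h', hifalse] at hktrue; simp at hktrue
        · exact h'
      have hkj : k ≤ j := (mem_Icc.mp hkmem).2
      have hLmem : ∀ m ∈ Icc i (k-1), m ∈ Icc i j := by
        intro m hm; rw [mem_Icc] at hm ⊢; omega
      have hRmem : ∀ m ∈ Icc k j, m ∈ Icc i j := by
        intro m hm; rw [mem_Icc] at hm ⊢; omega
      have hLhead : ∀ m ∈ Icc i (k-1), (c m).headI = false := by
        intro m hm
        have hmlt : m < k := by rw [mem_Icc] at hm; omega
        have := hkmin m hmlt
        cases h : (c m).headI
        · rfl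
        · exact absurd ⟨hLmem m hm, h⟩ this
      have hRhead : ∀ m ∈ Icc k j, (c m).headI = true := by
        intro m hm
        rcases eq_or_lt_of_le (mem_Icc.mp hm).1 with h' | h'
        · rw [← h']; exact hktrue
        · have := h2 k hkmem m (hRmem m hm) h'
          rw [← hct k hkmem, ← hct m (hRmem m hm)] at this
          exact lex_head this hktrue
      -- the left and right stripped codes
      set c' : ℕ → List Bool := fun m => (c m).tail with hc'
      have hL : OPT p i (k-1) w ≤ ∑ m ∈ Icc i (k-1), (p m : ℝ≥0∞) * ((c' m).length : ℝ≥0∞) := by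
        apply opt_le
        · intro a ha b hb hab hpre
          apply h1 a (hLmem a ha) b (hLmem b hb) hab
          rw [← hct a (hLmem a ha), ← hct b (hLmem b hb)]
          exact List.cons_prefix_cons.mpr ⟨(hLhead a ha).trans (hLhead b hb).symm, hpre⟩
        · intro a ha b hb hab
          have := h2 a (hLmem a ha) b (hLmem b hb) hab
          rw [← hct a (hLmem a ha), ← hct b (hLmem b hb),
            (hLhead a ha).trans (hLhead b hb).symm] at this
          exact lex_tail this
        · intro a ha
          exact le_trans ((List.tail_sublist (c a)).count_le true) (h3 a (hLmem a ha))
      have hR : OPT p k j (w-1) ≤ ∑ m ∈ Icc k j, (p m : ℝ≥0∞) * ((c' m).length : ℝ≥0∞) := by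
        apply opt_le
        · intro a ha b hb hab hpre
          apply h1 a (hRmem a ha) b (hRmem b hb) hab
          rw [← hct a (hRmem a ha), ← hct b (hRmem b hb)]
          exact List.cons_prefix_cons.mpr ⟨(hRhead a ha).trans (hRhead b hb).symm, hpre⟩
        · intro a ha b hb hab
          have := h2 a (hRmem a ha) b (hRmem b hb) hab
          rw [← hct a (hRmem a ha), ← hct b (hRmem b hb),
            (hRhead a ha).trans (hRhead b hb).symm] at this
          exact lex_tail this
        · intro a ha
          have hc : (c a).count true = (c' a).count true + 1 := by
            conv_lhs => rw [← hct a (hRmem a ha)]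
            rw [hRhead a ha]
            simp [List.count_cons, hc']
          have := h3 a (hRmem a ha)
          omega
      have hinf : (⨅ m ∈ Ioc i j, (OPT p i (m-1) w + OPT p m j (w-1)))
          ≤ OPT p i (k-1) w + OPT p k j (w-1) :=
        iInf₂_le k (by rw [mem_Ioc]; exact ⟨hik, hkj⟩)
      calc (∑ m ∈ Icc i j, (p m : ℝ≥0∞)) + ⨅ m ∈ Ioc i j, (OPT p i (m-1) w + OPT p m j (w-1))
          ≤ (∑ m ∈ Icc i j, (p m : ℝ≥0∞)) + (OPT p i (k-1) w + OPT p k j (w-1)) :=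
            add_le_add_right hinf _
        _ ≤ (∑ m ∈ Icc i j, (p m : ℝ≥0∞)) +
            ((∑ m ∈ Icc i (k-1), (p m : ℝ≥0∞) * ((c' m).length : ℝ≥0∞)) +
              ∑ m ∈ Icc k j, (p m : ℝ≥0∞) * ((c' m).length : ℝ≥0∞)) :=
            add_le_add_right (add_le_add hL hR) _
        _ = ∑ m ∈ Icc i j, (p m : ℝ≥0∞) * ((c m).length : ℝ≥0∞) := by
            rw [sum_split hik hkj (fun m => (p m : ℝ≥0∞) * ((c m).length : ℝ≥0∞)),
              sum_split hik hkj (fun m => (p m : ℝ≥0∞))]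
            have eL : ∑ m ∈ Icc i (k-1), (p m : ℝ≥0∞) * ((c m).length : ℝ≥0∞)
                = ∑ m ∈ Icc i (k-1), ((p m : ℝ≥0∞) + (p m : ℝ≥0∞) * ((c' m).length : ℝ≥0∞)) := by
              refine Finset.sum_congr rfl fun m hm => ?_
              rw [hlen m (hLmem m hm)]
              push_cast
              ring
            have eR : ∑ m ∈ Icc k j, (p m : ℝ≥0∞) * ((c m).length : ℝ≥0∞)
                = ∑ m ∈ Icc k j, ((p m : ℝ≥0∞) + (p m : ℝ≥0∞) * ((c' m).length : ℝ≥0∞)) := by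
              refine Finset.sum_congr rfl fun m hm => ?_
              rw [hlen m (hRmem m hm)]
              push_cast
              ring
            rw [eL, eR, Finset.sum_add_distrib, Finset.sum_add_distrib]
            ring


/-- **The dynamic-programming recurrence (eq. (2) of the paper).** `OPT(i,i,w) = 0` for
all `w ≥ 0`; `OPT(i,j,0) = ∞` for `i < j`; and for all `1 ≤ i < j ≤ n` and `w ≥ 1`,
`OPT(i,j,w) = (p_i + ⋯ + p_j) + min_{i < k ≤ j} (OPT(i,k-1,w) + OPT(k,j,w-1))`. -/
theorem OPT_recurrence (n : ℕ) (p : ℕ → ℝ≥0) :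
    (∀ i w : ℕ, OPT p i i w = 0) ∧
    (∀ i j : ℕ, i < j → OPT p i j 0 = ⊤) ∧
    (∀ i j w : ℕ, 1 ≤ i → i < j → j ≤ n → 1 ≤ w →
      OPT p i j w = (∑ k ∈ Finset.Icc i j, (p k : ℝ≥0∞)) +
        ⨅ k ∈ Finset.Ioc i j, (OPT p i (k - 1) w + OPT p k j (w - 1))) := by
  refine ⟨?_, ?_, ?_⟩
  · -- single symbol
    intro i w
    refine le_antisymm ?_ zero_le
    have h := opt_le p i i w (fun _ => []) ?_ ?_ ?_
    · simpa using h
    · intro k hk l hl hkl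
      simp only [Finset.mem_Icc] at hk hl
      omega
    · intro k hk l hl hkl
      simp only [Finset.mem_Icc] at hk hl
      omega
    · intro k _; simp
  · -- w = 0, i < j : infinite
    intro i j hij
    rw [OPT, eq_top_iff]
    refine le_iInf fun c => le_iInf fun h1 => le_iInf fun h2 => le_iInf fun h3 => ?_
    exfalso
    have hi : i ∈ Finset.Icc i j := by simp [hij.le]
    have hj : j ∈ Finset.Icc i j := by simp [hij.le]
    have hci : (c i).count true = 0 := Nat.le_zero.mp (h3 i hi)
    have hcj : (c j).count true = 0 := Nat.le_zero.mp (h3 j hj)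
    exact h1 i hi j hj (Nat.ne_of_lt hij) (lex_no_true (h2 i hi j hj hij) hci hcj)
  · -- recurrence
    intro i j w _ hij _ hw
    refine le_antisymm ?_ ?_
    · -- ≤ : combine codes
      simp only [ENNReal.add_iInf]
      refine le_iInf fun k => le_iInf fun hk => ?_
      rw [Finset.mem_Ioc] at hk
      obtain ⟨hik, hkj⟩ := hk
      conv_rhs => rw [OPT, OPT]
      simp only [ENNReal.iInf_add, ENNReal.add_iInf]
      refine le_iInf fun cR => le_iInf fun hR1 => le_iInf fun hR2 => le_iInf fun hR3 =>
        le_iInf fun cL => le_iInf fun hL1 => le_iInf fun hL2 => le_iInf fun hL3 => ?_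
      refine le_trans (opt_le p i j w
        (fun m => if m ≤ k-1 then false :: cL m else true :: cR m) ?_ ?_ ?_) (le_of_eq ?_)
      · intro a ha b hb hab hpre
        rw [Finset.mem_Icc] at ha hb
        by_cases hal : a ≤ k-1
        · by_cases hbl : b ≤ k-1
          · rw [if_pos hal, if_pos hbl, List.cons_prefix_cons] at hpre
            exact hL1 a (by rw [Finset.mem_Icc]; omega) b (by rw [Finset.mem_Icc]; omega)
              hab hpre.2
          · rw [if_pos hal, if_neg hbl, List.cons_prefix_cons] at hpre
            exact Bool.noConfusion hpre.1
        · by_cases hbl : b ≤ k-1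
          · rw [if_neg hal, if_pos hbl, List.cons_prefix_cons] at hpre
            exact Bool.noConfusion hpre.1
          · rw [if_neg hal, if_neg hbl, List.cons_prefix_cons] at hpre
            exact hR1 a (by rw [Finset.mem_Icc]; omega) b (by rw [Finset.mem_Icc]; omega)
              hab hpre.2
      · intro a ha b hb hab
        rw [Finset.mem_Icc] at ha hb
        by_cases hal : a ≤ k-1
        · by_cases hbl : b ≤ k-1
          · rw [if_pos hal, if_pos hbl]
            exact List.Lex.cons (hL2 a (by rw [Finset.mem_Icc]; omega)
              b (by rw [Finset.mem_Icc]; omega) hab)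
          · rw [if_pos hal, if_neg hbl]
            exact List.Lex.rel (by decide)
        · by_cases hbl : b ≤ k-1
          · omega
          · rw [if_neg hal, if_neg hbl]
            exact List.Lex.cons (hR2 a (by rw [Finset.mem_Icc]; omega)
              b (by rw [Finset.mem_Icc]; omega) hab)
      · intro a ha
        rw [Finset.mem_Icc] at ha
        by_cases hal : a ≤ k-1
        · rw [if_pos hal]
          have := hL3 a (by rw [Finset.mem_Icc]; omega)
          simpa [List.count_cons] using this
        · rw [if_neg hal]
          have h4 := hR3 a (by rw [Finset.mem_Icc]; omega)
          have h5 : (true :: cR a).count true = (cR a).count true + 1 := by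
            simp [List.count_cons]
          omega
      · rw [sum_split hik hkj, sum_split hik hkj (fun m => (p m : ℝ≥0∞))]
        have eL : ∀ m ∈ Finset.Icc i (k-1),
            (p m : ℝ≥0∞) * (((fun m => if m ≤ k-1 then false :: cL m else true :: cR m) m).length : ℝ≥0∞)
            = (p m : ℝ≥0∞) + (p m : ℝ≥0∞) * ((cL m).length : ℝ≥0∞) := by
          intro m hm
          rw [Finset.mem_Icc] at hm
          dsimp only
          rw [if_pos hm.2]
          push_cast [List.length_cons]
          ring
        have eR : ∀ m ∈ Finset.Icc k j,
            (p m : ℝ≥0∞) * (((fun m => if m ≤ k-1 then false :: cL m else true :: cR m) m).length : ℝ≥0∞)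
            = (p m : ℝ≥0∞) + (p m : ℝ≥0∞) * ((cR m).length : ℝ≥0∞) := by
          intro m hm
          rw [Finset.mem_Icc] at hm
          dsimp only
          rw [if_neg (by omega)]
          push_cast [List.length_cons]
          ring
        rw [Finset.sum_congr rfl eL, Finset.sum_congr rfl eR,
          Finset.sum_add_distrib, Finset.sum_add_distrib]
        ring
    · -- ≥ : structure of any code
      rw [OPT]
      refine le_iInf fun c => le_iInf fun h1 => le_iInf fun h2 => le_iInf fun h3 => ?_
      exact cost_ge p i j w hij _ c le_rfl h1 h2 h3
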